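/- Let α ∈ (0, π/3]. There exists a constant c > 0, depending only on α, with the following property: for every h > 0, letting T ⊆ ℝ² be the isosceles triangle conv{(0,0), (h,0), (h/2, (h/2)·tan α)}, and for every continuously differentiable function v : ℝ² → ℝ, one has (∫₀ʰ v(x,0)² dx)^{1/2} ≤ c · ( h^{-1/2} · (∫_T v² )^{1/2} + h^{1/2} · (∫_T ‖∇v‖²)^{1/2} ), where the integrals over T are with respect to two-dimensional Lebesgue measure and ∇v is the gradient of v. -/

import Mathlib

open Metric MeasureTheory

/-- A point of the Euclidean plane with given coordinates. -/
def planePt (a b : ℝ) : EuclideanSpace ℝ (Fin 2) := WithLp.toLp 2 ![a, b]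

section Aux

lemma planePt_smul (s a b : ℝ) : s • planePt a b = planePt (s * a) (s * b) := by
  ext i; fin_cases i <;> simp [planePt]

lemma planePt_add (a b c d : ℝ) : planePt a b + planePt c d = planePt (a + c) (b + d) := by
  ext i; fin_cases i <;> simp [planePt]

lemma planePt_add_smul (a b s c d : ℝ) :
    planePt a b + s • planePt c d = planePt (a + s * c) (b + s * d) := by
  ext i
  fin_cases i <;> simp [planePt]

lemma planePt_norm (c d : ℝ) : ‖planePt c d‖ = Real.sqrt (c ^ 2 + d ^ 2) := by
  rw [EuclideanSpace.norm_eq]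
  simp [planePt, Fin.sum_univ_two, sq_abs]

lemma curve_deriv (v : EuclideanSpace ℝ (Fin 2) → ℝ) (hv : ContDiff ℝ 1 v)
    (p₀ dvec : EuclideanSpace ℝ (Fin 2)) (s : ℝ) :
    HasDerivAt (fun t : ℝ => v (p₀ + t • dvec)) (fderiv ℝ v (p₀ + s • dvec) dvec) s := by
  have hc : HasDerivAt (fun t : ℝ => p₀ + t • dvec) dvec s := by
    simpa using ((hasDerivAt_id s).smul_const dvec).const_add p₀
  have hd := (hv.differentiable one_ne_zero (p₀ + s • dvec)).hasFDerivAt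
  exact hd.comp_hasDerivAt s hc

noncomputable def sh (c₁ c₂ : ℝ) : ℝ × ℝ →ₗ[ℝ] ℝ × ℝ where
  toFun z := (z.1 + c₁ * z.2, c₂ * z.2)
  map_add' x y := by simp [Prod.ext_iff]; constructor <;> ring
  map_smul' r x := by simp [Prod.ext_iff, smul_eq_mul]; constructor <;> ring

lemma sh_det (c₁ c₂ : ℝ) : LinearMap.det (sh c₁ c₂) = c₂ := by
  rw [← LinearMap.det_toMatrix (Module.Basis.finTwoProd ℝ)]
  have : LinearMap.toMatrix (Module.Basis.finTwoProd ℝ) (Module.Basis.finTwoProd ℝ) (sh c₁ c₂)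
      = !![1, c₁; 0, c₂] := by
    ext i j
    fin_cases i <;> fin_cases j <;>
      simp [LinearMap.toMatrix_apply, sh, Module.Basis.finTwoProd_zero, Module.Basis.finTwoProd_one,
        Module.Basis.coe_finTwoProd_repr]
  rw [this, Matrix.det_fin_two_of]; ring

lemma integral_shear_image (c₁ c₂ : ℝ) (hc₂ : c₂ ≠ 0) {s : Set (ℝ × ℝ)} (hs : MeasurableSet s)
    (g : ℝ × ℝ → ℝ) :
    ∫ z in (fun z : ℝ × ℝ => (z.1 + c₁ * z.2, c₂ * z.2)) '' s, g z
      = |c₂| * ∫ z in s, g (z.1 + c₁ * z.2, c₂ * z.2) := by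
  have hinj : Set.InjOn (fun z : ℝ × ℝ => (z.1 + c₁ * z.2, c₂ * z.2)) s := by
    intro a _ b _ hab
    simp only [Prod.ext_iff] at hab
    have h2 : a.2 = b.2 := mul_left_cancel₀ hc₂ hab.2
    have h1 : a.1 = b.1 := by have := hab.1; rw [h2] at this; linarith
    exact Prod.ext h1 h2
  have hder : ∀ x ∈ s, HasFDerivWithinAt (fun z : ℝ × ℝ => (z.1 + c₁ * z.2, c₂ * z.2))
      ((sh c₁ c₂).toContinuousLinearMap) s x := fun x _ =>
    ((sh c₁ c₂).toContinuousLinearMap.hasFDerivAt).hasFDerivWithinAt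
  rw [integral_image_eq_integral_abs_det_fderiv_smul volume hs hder hinj g]
  have hdet : ((sh c₁ c₂).toContinuousLinearMap : (ℝ × ℝ) →L[ℝ] ℝ × ℝ).det = c₂ := by
    rw [ContinuousLinearMap.det]
    simp [sh_det]
  simp_rw [hdet, smul_eq_mul]
  rw [MeasureTheory.integral_const_mul]

noncomputable def PptE : (ℝ × ℝ) ≃ᵐ EuclideanSpace ℝ (Fin 2) :=
  (MeasurableEquiv.finTwoArrow).symm.trans (MeasurableEquiv.toLp 2 (Fin 2 → ℝ))

lemma PptE_eq (z : ℝ × ℝ) : PptE z = planePt z.1 z.2 := by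
  simp [PptE, planePt, MeasurableEquiv.finTwoArrow]

lemma PptE_mp : MeasurePreserving (PptE) volume volume :=
  ((EuclideanSpace.volume_preserving_symm_measurableEquiv_toLp (Fin 2)).symm).comp
    ((volume_preserving_finTwoArrow ℝ).symm)

lemma PptE_cont : Continuous (PptE : ℝ × ℝ → EuclideanSpace ℝ (Fin 2)) := by
  have : (PptE : ℝ × ℝ → EuclideanSpace ℝ (Fin 2)) =
      (EuclideanSpace.equiv (Fin 2) ℝ).symm ∘ (fun z : ℝ × ℝ => ![z.1, z.2]) := by
    funext z
    rw [PptE_eq]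
    rfl
  rw [this]
  exact (EuclideanSpace.equiv (Fin 2) ℝ).symm.continuous.comp
    (continuous_pi fun i => by fin_cases i <;> simp <;> fun_prop)

lemma PptE_symm_eq (p : EuclideanSpace ℝ (Fin 2)) : PptE.symm p = (p 0, p 1) := by
  apply PptE.injective
  rw [MeasurableEquiv.apply_symm_apply, PptE_eq]
  ext i
  fin_cases i <;> simp [planePt]

lemma ftc_avg (g g' : ℝ → ℝ) (hg : ∀ s, HasDerivAt g (g' s) s) (hg' : Continuous g')
    (ℓ : ℝ) (hℓ : 0 < ℓ) :
    g 0 ^ 2 ≤ (1/ℓ) * (∫ s in (0:ℝ)..ℓ, (g s)^2) + ∫ s in (0:ℝ)..ℓ, 2 * |g s| * |g' s| := by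
  have hgc : Continuous g := continuous_iff_continuousAt.2 fun s => (hg s).continuousAt
  set C := ∫ s in (0:ℝ)..ℓ, 2 * |g s| * |g' s| with hC
  have habs : Continuous fun t => 2 * |g t| * |g' t| :=
    (continuous_const.mul hgc.abs).mul hg'.abs
  have key : ∀ s ∈ Set.Icc (0:ℝ) ℓ, g 0 ^ 2 ≤ g s ^ 2 + C := by
    intro s hs
    have hftc : ∫ t in (0:ℝ)..s, 2 * g t * g' t = g s ^ 2 - g 0 ^ 2 := by
      apply intervalIntegral.integral_eq_sub_of_hasDerivAt
      · intro t _
        simpa [pow_one] using (hg t).fun_pow 2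
      · exact ((continuous_const.mul hgc).mul hg').intervalIntegrable _ _
    have h1 : |∫ t in (0:ℝ)..s, 2 * g t * g' t| ≤ ∫ t in (0:ℝ)..s, |2 * g t * g' t| :=
      intervalIntegral.abs_integral_le_integral_abs hs.1
    have h2 : (∫ t in (0:ℝ)..s, |2 * g t * g' t|) ≤ C := by
      rw [hC]
      have : ∀ t, |2 * g t * g' t| = 2 * |g t| * |g' t| := by
        intro t; rw [abs_mul, abs_mul, abs_two]
      simp_rw [this]
      apply intervalIntegral.integral_mono_interval le_rfl hs.1 hs.2
      · filter_upwards with t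
        positivity
      · exact habs.intervalIntegrable _ _
    nlinarith [abs_nonneg (∫ t in (0:ℝ)..s, 2 * g t * g' t),
      neg_abs_le (∫ t in (0:ℝ)..s, 2 * g t * g' t)]
  have hmono : (∫ _ in (0:ℝ)..ℓ, g 0 ^ 2) ≤ ∫ s in (0:ℝ)..ℓ, (g s ^ 2 + C) := by
    apply intervalIntegral.integral_mono_on hℓ.le
    · exact intervalIntegrable_const
    · exact ((hgc.pow 2).add continuous_const).intervalIntegrable _ _
    · exact key
  rw [intervalIntegral.integral_const,
    intervalIntegral.integral_add ((hgc.fun_pow 2).intervalIntegrable _ _)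
      intervalIntegrable_const,
    intervalIntegral.integral_const] at hmono
  simp only [smul_eq_mul, sub_zero] at hmono
  rw [div_mul_eq_mul_div, div_add' _ _ _ hℓ.ne', le_div_iff₀ hℓ]
  nlinarith [hmono]

lemma shear_int_le (c₁ sα : ℝ) (hsα : 0 < sα) (a b ℓ : ℝ)
    (T : Set (EuclideanSpace ℝ (Fin 2))) (hT : IsCompact T)
    (F : EuclideanSpace ℝ (Fin 2) → ℝ) (hF : Continuous F) (hF0 : ∀ p, 0 ≤ F p)
    (himg : ∀ x s : ℝ, x ∈ Set.Icc a b → s ∈ Set.Icc 0 ℓ →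
      planePt (x + c₁ * s) (sα * s) ∈ T) :
    ∫ x in Set.Ioc a b, (∫ s in Set.Ioc 0 ℓ, F (planePt (x + c₁ * s) (sα * s))) ≤
      (1 / sα) * ∫ p in T, F p := by
  set σ : ℝ × ℝ → ℝ × ℝ := fun z => (z.1 + c₁ * z.2, sα * z.2) with hσ
  set G : ℝ × ℝ → ℝ := fun z => F (PptE z) with hG
  have hGσ : ∀ z : ℝ × ℝ, G (σ z) = F (planePt (z.1 + c₁ * z.2) (sα * z.2)) := by
    intro z; rw [hG]; simp only [hσ]; rw [PptE_eq]
  have hGc : Continuous G := hF.comp PptE_cont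
  have hGσc : Continuous (fun z => G (σ z)) := by
    apply hGc.comp; fun_prop
  set R : Set (ℝ × ℝ) := Set.Ioc a b ×ˢ Set.Ioc 0 ℓ with hR
  have hRm : MeasurableSet R := measurableSet_Ioc.prod measurableSet_Ioc
  have hint : IntegrableOn (fun z => G (σ z)) R := by
    apply IntegrableOn.mono_set
      (hGσc.continuousOn.integrableOn_compact (isCompact_Icc.prod isCompact_Icc))
    exact Set.prod_mono Set.Ioc_subset_Icc_self Set.Ioc_subset_Icc_self
  set W : Set (ℝ × ℝ) := PptE ⁻¹' T with hW
  have hWeq : W = (fun p => PptE.symm p) '' T := by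
    ext z
    simp only [hW, Set.mem_preimage, Set.mem_image]
    constructor
    · intro hz; exact ⟨PptE z, hz, PptE.symm_apply_apply z⟩
    · rintro ⟨p, hp, rfl⟩; rwa [MeasurableEquiv.apply_symm_apply]
  have hsymmc : Continuous (fun p : EuclideanSpace ℝ (Fin 2) => PptE.symm p) := by
    have he : (fun p : EuclideanSpace ℝ (Fin 2) => PptE.symm p)
        = fun p => (p 0, p 1) := funext PptE_symm_eq
    rw [he]
    exact ((EuclideanSpace.proj (0 : Fin 2)).continuous).prodMk
      ((EuclideanSpace.proj (1 : Fin 2)).continuous)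
  have hWcomp : IsCompact W := by rw [hWeq]; exact hT.image hsymmc
  have hintW : IntegrableOn G W := hGc.continuousOn.integrableOn_compact hWcomp
  have hsub : σ '' R ⊆ W := by
    rintro _ ⟨z, hz, rfl⟩
    simp only [hW, Set.mem_preimage]
    rw [PptE_eq]
    exact himg z.1 z.2 (Set.Ioc_subset_Icc_self hz.1) (Set.Ioc_subset_Icc_self hz.2)
  have fub : ∫ x in Set.Ioc a b, (∫ s in Set.Ioc 0 ℓ, F (planePt (x + c₁ * s) (sα * s)))
      = ∫ z in R, G (σ z) := by
    rw [hR, Measure.volume_eq_prod, setIntegral_prod _ ?_]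
    · simp_rw [hGσ]
    · rwa [← Measure.volume_eq_prod]
  rw [fub]
  have cov : ∫ z in σ '' R, G z = sα * ∫ z in R, G (σ z) := by
    have := integral_shear_image c₁ sα hsα.ne' hRm G
    rwa [abs_of_pos hsα] at this
  have mono : ∫ z in σ '' R, G z ≤ ∫ z in W, G z := by
    apply setIntegral_mono_set hintW
    · filter_upwards with z using hF0 _
    · exact HasSubset.Subset.eventuallyLE hsub
  have transfer : ∫ z in W, G z = ∫ p in T, F p := by
    have := PptE_mp.setIntegral_preimage_emb PptE.measurableEmbedding F T
    simpa [hW, hG] using this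
  rw [transfer] at mono
  rw [cov] at mono
  rw [mul_comm, ← le_div_iff₀ hsα] at mono
  calc ∫ z in R, G (σ z) ≤ (∫ p in T, F p) / sα := mono
    _ = (1 / sα) * ∫ p in T, F p := by ring

lemma half_est (h ℓ sα c₁ : ℝ) (hh : 0 < h) (hℓ : 0 < ℓ) (hsα : 0 < sα)
    (hnorm : c₁ ^ 2 + sα ^ 2 = 1)
    (v : EuclideanSpace ℝ (Fin 2) → ℝ) (hv : ContDiff ℝ 1 v)
    (a b : ℝ) (hab : a ≤ b)
    (T : Set (EuclideanSpace ℝ (Fin 2))) (hT : IsCompact T)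
    (himg : ∀ x s : ℝ, x ∈ Set.Icc a b → s ∈ Set.Icc 0 ℓ →
      planePt (x + c₁ * s) (sα * s) ∈ T) :
    ∫ x in a..b, (v (planePt x 0)) ^ 2 ≤
      (1 / sα) * ∫ p in T, ((1/ℓ + 1/h) * (v p) ^ 2 + h * ‖fderiv ℝ v p‖ ^ 2) := by
  set dvec : EuclideanSpace ℝ (Fin 2) := planePt c₁ sα with hdv
  have hd1 : ‖dvec‖ = 1 := by rw [hdv, planePt_norm, hnorm, Real.sqrt_one]
  set vd := fderiv ℝ v with hvd
  have hvdc : Continuous vd := hv.continuous_fderiv one_ne_zero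
  set F : EuclideanSpace ℝ (Fin 2) → ℝ :=
    fun p => (1/ℓ + 1/h) * (v p) ^ 2 + h * ‖vd p‖ ^ 2 with hF
  have hFc : Continuous F := by
    apply Continuous.add
    · exact continuous_const.mul ((hv.continuous).pow 2)
    · exact continuous_const.mul ((hvdc.norm).pow 2)
  have hF0 : ∀ p, 0 ≤ F p := by
    intro p
    have h1 : (0:ℝ) ≤ 1/ℓ + 1/h := by positivity
    exact add_nonneg (mul_nonneg h1 (sq_nonneg _)) (mul_nonneg hh.le (sq_nonneg _))
  set c : ℝ → ℝ → EuclideanSpace ℝ (Fin 2) :=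
    fun x s => planePt (x + c₁ * s) (sα * s) with hc
  have hcurve : ∀ x s : ℝ, planePt x 0 + s • dvec = c x s := by
    intro x s
    rw [hdv, planePt_add_smul, hc]
    have e1 : x + s * c₁ = x + c₁ * s := by ring
    have e2 : 0 + s * sα = sα * s := by ring
    rw [e1, e2]
  have hcc : Continuous (fun z : ℝ × ℝ => c z.1 z.2) := by
    have : (fun z : ℝ × ℝ => c z.1 z.2)
        = fun z : ℝ × ℝ => PptE (z.1 + c₁ * z.2, sα * z.2) := by
      funext z; rw [PptE_eq]
    rw [this]
    exact PptE_cont.comp (by fun_prop)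
  have key : ∀ x ∈ Set.Icc a b,
      (v (planePt x 0)) ^ 2 ≤ ∫ s in (0:ℝ)..ℓ, F (c x s) := by
    intro x _
    set g : ℝ → ℝ := fun s => v (planePt x 0 + s • dvec) with hg
    set g' : ℝ → ℝ := fun s => vd (planePt x 0 + s • dvec) dvec with hg'
    have hder : ∀ s, HasDerivAt g (g' s) s := fun s => curve_deriv v hv _ dvec s
    have pc : Continuous (fun s : ℝ => planePt x 0 + s • dvec) := by fun_prop
    have hgc : Continuous g := hv.continuous.comp pc
    have hg'c : Continuous g' :=
      (ContinuousLinearMap.apply ℝ ℝ dvec).continuous.comp (hvdc.comp pc)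
    have h0 : g 0 = v (planePt x 0) := by rw [hg]; simp
    have main := ftc_avg g g' hder hg'c ℓ hℓ
    have hb : ∀ s ∈ Set.Icc (0:ℝ) ℓ, 2 * |g s| * |g' s| ≤
        (1/h) * (g s) ^ 2 + h * ‖vd (planePt x 0 + s • dvec)‖ ^ 2 := by
      intro s _
      have hop : |g' s| ≤ ‖vd (planePt x 0 + s • dvec)‖ := by
        rw [hg']
        calc |vd (planePt x 0 + s • dvec) dvec|
            ≤ ‖vd (planePt x 0 + s • dvec)‖ * ‖dvec‖ :=
              (vd (planePt x 0 + s • dvec)).le_opNorm dvec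
          _ = ‖vd (planePt x 0 + s • dvec)‖ := by rw [hd1, mul_one]
      have h1 : (0:ℝ) ≤ |g s| := abs_nonneg _
      have h2 : (0:ℝ) ≤ |g' s| := abs_nonneg _
      have h3 : (0:ℝ) ≤ ‖vd (planePt x 0 + s • dvec)‖ := norm_nonneg _
      have hsq : (g s) ^ 2 = |g s| ^ 2 := (sq_abs _).symm
      rw [hsq]
      set B := ‖vd (planePt x 0 + s • dvec)‖ with hB
      have step : 2 * |g s| * |g' s| ≤ 2 * |g s| * B :=
        mul_le_mul_of_nonneg_left hop (mul_nonneg (by norm_num : (0:ℝ) ≤ 2) h1)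
      have step2 : 2 * |g s| * B ≤ (1/h) * |g s| ^ 2 + h * B ^ 2 := by
        rw [← sub_nonneg]
        have hid : (1/h) * |g s| ^ 2 + h * B ^ 2 - 2 * |g s| * B
            = (1/h) * (|g s| - h * B) ^ 2 := by
          field_simp
          ring
        rw [hid]
        positivity
      linarith
    have int1 : IntervalIntegrable (fun s => 2 * |g s| * |g' s|) volume 0 ℓ :=
      (((continuous_const.mul hgc.abs).mul hg'c.abs)).intervalIntegrable _ _
    have int2 : IntervalIntegrable
        (fun s => (1/h) * (g s) ^ 2 + h * ‖vd (planePt x 0 + s • dvec)‖ ^ 2) volume 0 ℓ :=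
      ((continuous_const.mul (hgc.pow 2)).add
        (continuous_const.mul (((hvdc.comp pc).norm).pow 2))).intervalIntegrable _ _
    have h2' := intervalIntegral.integral_mono_on hℓ.le int1 int2 hb
    have hFeq : ∫ s in (0:ℝ)..ℓ, F (c x s)
        = (1/ℓ) * (∫ s in (0:ℝ)..ℓ, (g s) ^ 2)
          + ∫ s in (0:ℝ)..ℓ, ((1/h) * (g s) ^ 2
              + h * ‖vd (planePt x 0 + s • dvec)‖ ^ 2) := by
      rw [← intervalIntegral.integral_const_mul,
        ← intervalIntegral.integral_add (f := fun s => 1/ℓ * g s ^ 2)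
          ((continuous_const.mul (hgc.fun_pow 2)).intervalIntegrable _ _) int2]
      apply intervalIntegral.integral_congr
      intro s _
      rw [hF, hg]
      simp only [hcurve x s]
      ring
    rw [hFeq]
    rw [h0] at main
    linarith
  have hJc : Continuous (fun x => ∫ s in (0:ℝ)..ℓ, F (c x s)) := by
    apply intervalIntegral.continuous_parametric_intervalIntegral_of_continuous'
    exact hFc.comp hcc
  have hLc : Continuous (fun x => (v (planePt x 0)) ^ 2) := by
    have : Continuous (fun x : ℝ => planePt x 0) := by
      have : (fun x : ℝ => planePt x 0) = fun x : ℝ => PptE (x, 0) := by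
        funext x; rw [PptE_eq]
      rw [this]; exact PptE_cont.comp (by fun_prop)
    exact (hv.continuous.comp this).pow 2
  have step1 : ∫ x in a..b, (v (planePt x 0)) ^ 2
      ≤ ∫ x in a..b, (∫ s in (0:ℝ)..ℓ, F (c x s)) :=
    intervalIntegral.integral_mono_on hab (hLc.intervalIntegrable _ _)
      (hJc.intervalIntegrable _ _) key
  have step2 : ∫ x in a..b, (∫ s in (0:ℝ)..ℓ, F (c x s))
      = ∫ x in Set.Ioc a b, (∫ s in Set.Ioc 0 ℓ, F (c x s)) := by
    rw [intervalIntegral.integral_of_le hab]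
    apply setIntegral_congr_fun measurableSet_Ioc
    intro x _
    exact intervalIntegral.integral_of_le hℓ.le
  calc ∫ x in a..b, (v (planePt x 0)) ^ 2
      ≤ ∫ x in Set.Ioc a b, (∫ s in Set.Ioc 0 ℓ, F (c x s)) := by rw [← step2]; exact step1
    _ ≤ (1 / sα) * ∫ p in T, F p := shear_int_le c₁ sα hsα a b ℓ T hT F hFc hF0 himg

lemma mem_hull (tα h : ℝ) (htα : 0 < tα) (hh : 0 < h) (u y : ℝ)
    (hy0 : 0 ≤ y) (hy1 : y ≤ tα * u) (hy2 : y ≤ tα * (h - u)) :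
    planePt u y ∈ convexHull ℝ
      ({planePt 0 0, planePt h 0, planePt (h/2) ((h/2) * tα)} :
        Set (EuclideanSpace ℝ (Fin 2))) := by
  set H : ℝ := (h/2) * tα with hH
  have hHpos : 0 < H := by positivity
  set cc : ℝ := y / H with hcc
  set bb : ℝ := (u - y / tα) / h with hbb
  set aa : ℝ := 1 - bb - cc with haa
  have hu0 : y / tα ≤ u := by rw [div_le_iff₀ htα]; nlinarith
  have huh : u ≤ h - y / tα := by
    rw [← sub_nonneg]
    have : y / tα ≤ h - u := by rw [div_le_iff₀ htα]; nlinarith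
    linarith
  have hbb0 : 0 ≤ bb := by
    rw [hbb]; apply div_nonneg _ hh.le; linarith
  have hcc0 : 0 ≤ cc := by positivity
  have haa0 : 0 ≤ aa := by
    have h2 : cc = 2 * (y / tα) / h := by rw [hcc, hH]; field_simp
    rw [haa, hbb, h2]
    have expand : 1 - (u - y / tα) / h - 2 * (y / tα) / h = (h - u - y/tα) / h := by
      field_simp; ring
    rw [expand]
    exact div_nonneg (by linarith) hh.le
  have hsum : aa + bb + cc = 1 := by rw [haa]; ring
  have hpt : planePt u y =
      aa • planePt 0 0 + bb • planePt h 0 + cc • planePt (h/2) H := by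
    rw [planePt_smul, planePt_smul, planePt_smul, planePt_add, planePt_add]
    have e1 : aa * 0 + bb * h + cc * (h/2) = u := by
      rw [hbb, hcc, hH]
      field_simp
      ring
    have e2 : aa * 0 + bb * 0 + cc * H = y := by
      rw [hcc]
      field_simp
      ring
    rw [e1]
    norm_num
    rw [show cc * H = y from by rw [hcc]; field_simp]
  rw [hpt]
  have hz : ∀ i ∈ (Finset.univ : Finset (Fin 3)),
      (![planePt 0 0, planePt h 0, planePt (h/2) H] i) ∈
        ({planePt 0 0, planePt h 0, planePt (h/2) ((h/2) * tα)} :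
          Set (EuclideanSpace ℝ (Fin 2))) := by
    intro i _; fin_cases i <;> simp [hH]
  have hw : ∀ i ∈ (Finset.univ : Finset (Fin 3)), 0 ≤ (![aa, bb, cc]) i := by
    intro i _; fin_cases i <;> simpa
  have hws : ∑ i, (![aa, bb, cc]) i = 1 := by
    rw [Fin.sum_univ_three]
    simpa using hsum
  have hmem := Finset.centerMass_mem_convexHull (Finset.univ : Finset (Fin 3)) hw
    (by rw [hws]; norm_num) hz
  rw [Finset.centerMass_eq_of_sum_1 _ _ hws, Fin.sum_univ_three] at hmem
  simpa using hmem

lemma sqrt_add_le' (a b : ℝ) (ha : 0 ≤ a) (hb : 0 ≤ b) :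
    Real.sqrt (a + b) ≤ Real.sqrt a + Real.sqrt b := by
  have h := Real.sqrt_le_sqrt (show a + b ≤ (Real.sqrt a + Real.sqrt b) ^ 2 by
    nlinarith [Real.sq_sqrt ha, Real.sq_sqrt hb, Real.sqrt_nonneg a, Real.sqrt_nonneg b,
      mul_nonneg (Real.sqrt_nonneg a) (Real.sqrt_nonneg b)])
  rwa [Real.sqrt_sq (by positivity)] at h

end Aux

lemma trace_cont (v : EuclideanSpace ℝ (Fin 2) → ℝ) (hv : Continuous v) :
    Continuous (fun x : ℝ => (v (planePt x 0)) ^ 2) := by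
  have : Continuous (fun x : ℝ => planePt x 0) := by
    have : (fun x : ℝ => planePt x 0) = fun x : ℝ => PptE (x, 0) := by
      funext x; rw [PptE_eq]
    rw [this]; exact PptE_cont.comp (by fun_prop)
  exact (hv.comp this).pow 2

/-- Scaled trace inequality on the isosceles triangle with base `[(0,0),(h,0)]` and base
angles `α`: the `L₂`-norm of the trace on the base is controlled by
`c (h^{-1/2} ‖v‖_{0,T} + h^{1/2} |v|_{1,T})`. -/
theorem trace_inequality_isosceles_triangle
    (α : ℝ) (hα0 : 0 < α) (hα : α ≤ Real.pi / 3) :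
    ∃ c : ℝ, 0 < c ∧ ∀ h : ℝ, 0 < h →
      ∀ v : EuclideanSpace ℝ (Fin 2) → ℝ, ContDiff ℝ 1 v →
        Real.sqrt (∫ x in (0 : ℝ)..h, v (planePt x 0) ^ 2) ≤
          c * (h ^ (-(1 / 2 : ℝ)) *
                Real.sqrt (∫ x in
                  convexHull ℝ ({planePt 0 0, planePt h 0,
                    planePt (h / 2) ((h / 2) * Real.tan α)} :
                      Set (EuclideanSpace ℝ (Fin 2))), v x ^ 2) +
              h ^ ((1 / 2 : ℝ)) *
                Real.sqrt (∫ x in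
                  convexHull ℝ ({planePt 0 0, planePt h 0,
                    planePt (h / 2) ((h / 2) * Real.tan α)} :
                      Set (EuclideanSpace ℝ (Fin 2))), ‖fderiv ℝ v x‖ ^ 2)) := by
  have hpi := Real.pi_pos
  have hαlt : α < Real.pi / 2 := lt_of_le_of_lt hα (by linarith)
  set cα := Real.cos α with hcαd
  set sα := Real.sin α with hsαd
  set tα := Real.tan α with htαd
  have hcα : 0 < cα := Real.cos_pos_of_mem_Ioo ⟨by linarith, hαlt⟩
  have hsα : 0 < sα := Real.sin_pos_of_pos_of_lt_pi hα0 (by linarith)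
  have htα : 0 < tα := Real.tan_pos_of_pos_of_lt_pi_div_two hα0 hαlt
  have htc : tα * cα = sα := by
    rw [htαd, Real.tan_eq_sin_div_cos]
    field_simp
    exact mul_div_cancel_right₀ _ hcα.ne'
  have hcα1 : cα ≤ 1 := Real.cos_le_one α
  set A : ℝ := 10 / sα with hA
  refine ⟨Real.sqrt A, Real.sqrt_pos.2 (by positivity), ?_⟩
  intro h hh v hv
  set T : Set (EuclideanSpace ℝ (Fin 2)) :=
    convexHull ℝ ({planePt 0 0, planePt h 0, planePt (h / 2) ((h / 2) * tα)} :
      Set (EuclideanSpace ℝ (Fin 2))) with hTd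
  have hTc : IsCompact T := by
    apply Set.Finite.isCompact_convexHull
    exact (Set.finite_singleton _).insert _ |>.insert _
  set ℓ : ℝ := h / (4 * cα) with hℓd
  have hℓ : 0 < ℓ := by positivity
  set X := ∫ p in T, (v p) ^ 2 with hX
  set Y := ∫ p in T, ‖fderiv ℝ v p‖ ^ 2 with hY
  have hX0 : 0 ≤ X := setIntegral_nonneg hTc.measurableSet fun p _ => sq_nonneg _
  have hY0 : 0 ≤ Y := setIntegral_nonneg hTc.measurableSet fun p _ => sq_nonneg _
  have hsℓ : sα * ℓ = tα * h / 4 := by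
    rw [hℓd, ← htc]
    field_simp
  -- image conditions
  have himgL : ∀ x s : ℝ, x ∈ Set.Icc 0 (h/2) → s ∈ Set.Icc 0 ℓ →
      planePt (x + cα * s) (sα * s) ∈ T := by
    intro x s hx hs
    apply mem_hull tα h htα hh
    · exact mul_nonneg hsα.le hs.1
    · have e : tα * (x + cα * s) = tα * x + sα * s := by
        rw [mul_add, show tα * (cα * s) = (tα * cα) * s by ring, htc]
      rw [e]
      nlinarith [mul_nonneg htα.le hx.1]
    · have e : tα * (h - (x + cα * s)) = tα * (h - x) - sα * s := by
        rw [show h - (x + cα * s) = (h - x) - cα * s by ring, mul_sub,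
          show tα * (cα * s) = (tα * cα) * s by ring, htc]
      rw [e]
      have h1 : sα * s ≤ sα * ℓ := mul_le_mul_of_nonneg_left hs.2 hsα.le
      have h3 : tα * (h/2) ≤ tα * (h - x) :=
        mul_le_mul_of_nonneg_left (by linarith [hx.2]) htα.le
      nlinarith
  have himgR : ∀ x s : ℝ, x ∈ Set.Icc (h/2) h → s ∈ Set.Icc 0 ℓ →
      planePt (x + (-cα) * s) (sα * s) ∈ T := by
    intro x s hx hs
    apply mem_hull tα h htα hh
    · exact mul_nonneg hsα.le hs.1
    · have e : tα * (x + (-cα) * s) = tα * x - sα * s := by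
        rw [show x + (-cα) * s = x - cα * s by ring, mul_sub,
          show tα * (cα * s) = (tα * cα) * s by ring, htc]
      rw [e]
      have h1 : sα * s ≤ sα * ℓ := mul_le_mul_of_nonneg_left hs.2 hsα.le
      have h3 : tα * (h/2) ≤ tα * x := mul_le_mul_of_nonneg_left hx.1 htα.le
      nlinarith
    · have e : tα * (h - (x + (-cα) * s)) = tα * (h - x) + sα * s := by
        rw [show h - (x + (-cα) * s) = (h - x) + cα * s by ring, mul_add,
          show tα * (cα * s) = (tα * cα) * s by ring, htc]
      rw [e]
      nlinarith [mul_nonneg htα.le (by linarith [hx.2] : (0:ℝ) ≤ h - x)]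
  have hnormL : cα ^ 2 + sα ^ 2 = 1 := by
    rw [hcαd, hsαd, add_comm]
    exact Real.sin_sq_add_cos_sq α
  have hnormR : (-cα) ^ 2 + sα ^ 2 = 1 := by rw [neg_sq]; exact hnormL
  have estL := half_est h ℓ sα cα hh hℓ hsα hnormL v hv 0 (h/2) (by linarith) T hTc himgL
  have estR := half_est h ℓ sα (-cα) hh hℓ hsα hnormR v hv (h/2) h (by linarith) T hTc himgR
  -- expand the T-integral
  have int1 : IntegrableOn (fun p => (1/ℓ + 1/h) * (v p) ^ 2) T :=
    ((continuous_const.mul ((hv.continuous).pow 2))).continuousOn.integrableOn_compact hTc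
  have int2 : IntegrableOn (fun p => h * ‖fderiv ℝ v p‖ ^ 2) T :=
    ((continuous_const.mul (((hv.continuous_fderiv one_ne_zero).norm).pow 2))).continuousOn.integrableOn_compact hTc
  have hTint : ∫ p in T, ((1/ℓ + 1/h) * (v p) ^ 2 + h * ‖fderiv ℝ v p‖ ^ 2)
      = (1/ℓ + 1/h) * X + h * Y := by
    rw [integral_add int1 int2, MeasureTheory.integral_const_mul,
      MeasureTheory.integral_const_mul]
  rw [hTint] at estL estR
  -- split the trace integral
  have hLc := trace_cont v hv.continuous
  have hsplit : ∫ x in (0:ℝ)..h, (v (planePt x 0)) ^ 2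
      = (∫ x in (0:ℝ)..(h/2), (v (planePt x 0)) ^ 2)
        + ∫ x in (h/2)..h, (v (planePt x 0)) ^ 2 :=
    (intervalIntegral.integral_add_adjacent_intervals
      (hLc.intervalIntegrable _ _) (hLc.intervalIntegrable _ _)).symm
  -- combine
  have hℓb : 1/ℓ + 1/h ≤ 5 / h := by
    have e : 1/ℓ = 4 * cα / h := by rw [hℓd, one_div_div]
    calc 1/ℓ + 1/h = (4 * cα + 1) / h := by rw [e]; ring
      _ ≤ 5 / h := by gcongr; linarith
  have hXb : (1/ℓ + 1/h) * X ≤ (5/h) * X := mul_le_mul_of_nonneg_right hℓb hX0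
  have hbound : (1 / sα) * ((1/ℓ + 1/h) * X + h * Y)
      ≤ (1 / sα) * ((5/h) * X + h * Y) := by
    apply mul_le_mul_of_nonneg_left _ (by positivity)
    linarith
  have e2 : 2 * ((1 / sα) * ((5/h) * X + h * Y))
      = (10/sα) * (h⁻¹ * X) + (2/sα) * (h * Y) := by
    field_simp
    ring
  have h2A : (2/sα) * (h * Y) ≤ A * (h * Y) := by
    apply mul_le_mul_of_nonneg_right _ (mul_nonneg hh.le hY0)
    rw [hA]
    exact (div_le_div_iff_of_pos_right hsα).mpr (by norm_num)
  have keyineq : ∫ x in (0:ℝ)..h, (v (planePt x 0)) ^ 2 ≤ A * (h⁻¹ * X) + A * (h * Y) := by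
    rw [hsplit]
    calc (∫ x in (0:ℝ)..(h/2), (v (planePt x 0)) ^ 2)
          + ∫ x in (h/2)..h, (v (planePt x 0)) ^ 2
        ≤ (1 / sα) * ((1/ℓ + 1/h) * X + h * Y)
          + (1 / sα) * ((1/ℓ + 1/h) * X + h * Y) := add_le_add estL estR
      _ = 2 * ((1 / sα) * ((1/ℓ + 1/h) * X + h * Y)) := by ring
      _ ≤ 2 * ((1 / sα) * ((5/h) * X + h * Y)) := by linarith
      _ = (10/sα) * (h⁻¹ * X) + (2/sα) * (h * Y) := e2
      _ ≤ A * (h⁻¹ * X) + A * (h * Y) := by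
          rw [hA]
          exact add_le_add le_rfl (by rw [← hA]; exact h2A)
  -- take square roots
  have hs1 : Real.sqrt (∫ x in (0:ℝ)..h, (v (planePt x 0)) ^ 2)
      ≤ Real.sqrt (A * (h⁻¹ * X) + A * (h * Y)) := Real.sqrt_le_sqrt keyineq
  have hA0 : (0:ℝ) ≤ A := by positivity
  have hs2 : Real.sqrt (A * (h⁻¹ * X) + A * (h * Y))
      ≤ Real.sqrt (A * (h⁻¹ * X)) + Real.sqrt (A * (h * Y)) :=
    sqrt_add_le' _ _ (by positivity) (mul_nonneg hA0 (mul_nonneg hh.le hY0))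
  have e3 : Real.sqrt (A * (h⁻¹ * X)) = Real.sqrt A * (Real.sqrt h⁻¹ * Real.sqrt X) := by
    rw [Real.sqrt_mul hA0, Real.sqrt_mul (by positivity)]
  have e4 : Real.sqrt (A * (h * Y)) = Real.sqrt A * (Real.sqrt h * Real.sqrt Y) := by
    rw [Real.sqrt_mul hA0, Real.sqrt_mul hh.le]
  have hrp1 : h ^ (-(1 / 2 : ℝ)) = Real.sqrt h⁻¹ := by
    rw [Real.rpow_neg hh.le, ← Real.sqrt_eq_rpow, Real.sqrt_inv]
  have hrp2 : h ^ ((1 / 2 : ℝ)) = Real.sqrt h := (Real.sqrt_eq_rpow h).symm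
  calc Real.sqrt (∫ x in (0:ℝ)..h, (v (planePt x 0)) ^ 2)
      ≤ Real.sqrt (A * (h⁻¹ * X) + A * (h * Y)) := hs1
    _ ≤ Real.sqrt (A * (h⁻¹ * X)) + Real.sqrt (A * (h * Y)) := hs2
    _ = Real.sqrt A * (h ^ (-(1 / 2 : ℝ)) * Real.sqrt X + h ^ ((1 / 2 : ℝ)) * Real.sqrt Y) := by
        rw [e3, e4, hrp1, hrp2]
        ring
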